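/- For 1 ≤ p ≤ 2 there exists a constant C such that for all t ≥ 2: ∫₀^{t/2} (t-s)^{-1} (1+s)^{-3/(2p)} ds + ∫_{t/2}^t (t-s)^{-1/2} (1+s)^{-1/2-3/(2p)} ds ≤ C (1+t)^{-1/2-1/(2p)}. -/

import Mathlib

open intervalIntegral MeasureTheory Set Real

private lemma intable_shift (c u v : ℝ) (hu : 0 ≤ u) (hv : 0 ≤ v) :
    IntervalIntegrable (fun s : ℝ => (1 + s) ^ (-c)) MeasureTheory.volume u v := by
  apply ContinuousOn.intervalIntegrable
  apply ContinuousOn.rpow_const (continuous_const.add continuous_id).continuousOn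
  intro x hx
  left
  have h1 : u ⊓ v ≤ x := hx.1
  have h0 : (0:ℝ) ≤ x := le_trans (le_inf hu hv) h1
  intro h; simp at h; linarith

private lemma integral_shift (c T : ℝ) (hc : c ≠ 1) (hT : 0 ≤ T) :
    ∫ s in (0:ℝ)..T, (1 + s) ^ (-c) = ((1 + T) ^ (1 - c) - 1) / (1 - c) := by
  have h := intervalIntegral.integral_comp_add_left (a := (0:ℝ)) (b := T)
    (fun x : ℝ => x ^ (-c)) 1
  simp only [add_zero] at h
  rw [h, integral_rpow (Or.inr ⟨fun hh => hc (by linarith [neg_injective hh]), by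
    rw [Set.mem_uIcc]; push_neg
    constructor <;> intro <;> linarith⟩)]
  rw [Real.one_rpow, neg_add_eq_sub]

private lemma first_le (c d t : ℝ) (hd : d ≤ c) (ht : 2 ≤ t) :
    (∫ s in (0:ℝ)..(t / 2), (t - s)⁻¹ * (1 + s) ^ (-c))
      ≤ (2 / t) * ∫ s in (0:ℝ)..(t / 2), (1 + s) ^ (-d) := by
  have ht0 : (0:ℝ) < t := by linarith
  have ht2 : (0:ℝ) ≤ t / 2 := by linarith
  rw [← intervalIntegral.integral_const_mul]
  apply intervalIntegral.integral_mono_on (by linarith)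
  · apply ContinuousOn.intervalIntegrable
    apply ContinuousOn.mul
    · apply ContinuousOn.inv₀ (continuous_const.sub continuous_id).continuousOn
      intro x hx
      rw [Set.uIcc_of_le (by linarith)] at hx
      have := hx.2
      intro h; simp at h; linarith
    · apply ContinuousOn.rpow_const (continuous_const.add continuous_id).continuousOn
      intro x hx
      rw [Set.uIcc_of_le (by linarith)] at hx
      have := hx.1
      left; intro h; simp at h; linarith
  · exact (intable_shift d 0 (t/2) le_rfl ht2).const_mul _
  · intro x hx
    obtain ⟨hx0, hx2⟩ := hx
    have h1 : (0:ℝ) < t - x := by linarith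
    have h2 : (t - x)⁻¹ ≤ 2 / t := by
      rw [div_eq_mul_inv, show (2:ℝ) * t⁻¹ = (t/2)⁻¹ by field_simp]
      exact inv_anti₀ (by linarith) (by linarith)
    have h3 : (1 + x) ^ (-c) ≤ (1 + x) ^ (-d) :=
      Real.rpow_le_rpow_of_exponent_le (by linarith) (by linarith)
    calc (t - x)⁻¹ * (1 + x) ^ (-c) ≤ (2 / t) * (1 + x) ^ (-c) :=
          mul_le_mul_of_nonneg_right h2 (Real.rpow_nonneg (by linarith) _)
      _ ≤ (2 / t) * (1 + x) ^ (-d) :=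
          mul_le_mul_of_nonneg_left h3 (by positivity)

private lemma sqrt_integral (t : ℝ) (ht : 2 ≤ t) :
    ∫ s in (t / 2)..t, (t - s) ^ (-(1:ℝ) / 2) = 2 * (t / 2) ^ ((1:ℝ) / 2) := by
  have h := intervalIntegral.integral_comp_sub_left (a := t/2) (b := t)
    (fun x : ℝ => x ^ (-(1:ℝ) / 2)) t
  rw [h, sub_self, integral_rpow (Or.inl (by norm_num)),
    Real.zero_rpow (by norm_num), show t - t / 2 = t / 2 by ring]
  norm_num
  ring

private lemma second_le (p t : ℝ) (hp1 : 1 ≤ p) (hp2 : p ≤ 2) (ht : 2 ≤ t) :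
    (∫ s in (t / 2)..t, (t - s) ^ (-(1:ℝ) / 2) * (1 + s) ^ (-(1 / 2) - 3 / (2 * p)))
      ≤ 8 * (1 + t) ^ (-(1 / 2) - 1 / (2 * p)) := by
  have hp0 : (0:ℝ) < p := by linarith
  have ht0 : (0:ℝ) < t := by linarith
  set c : ℝ := -(1/2) - 3/(2*p) with hcdef
  have hc0 : c ≤ 0 := by
    have : 0 < 3/(2*p) := by positivity
    rw [hcdef]; linarith
  have hbase : IntervalIntegrable (fun x : ℝ => x ^ (-(1:ℝ)/2)) volume 0 (t/2) :=
    intervalIntegral.intervalIntegrable_rpow' (by norm_num)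
  have hbase2 : IntervalIntegrable (fun s : ℝ => (t - s) ^ (-(1:ℝ)/2)) volume (t/2) t := by
    have := (hbase.comp_sub_left t).symm
    rw [show t - t / 2 = t / 2 by ring, sub_zero] at this
    exact this
  have hcont : ContinuousOn (fun s : ℝ => (1 + s) ^ c) (Set.uIcc (t/2) t) := by
    apply ContinuousOn.rpow_const (continuous_const.add continuous_id).continuousOn
    intro x hx
    rw [Set.uIcc_of_le (by linarith)] at hx
    have := hx.1
    left; intro h; simp at h; linarith
  have step1 : (∫ s in (t / 2)..t, (t - s) ^ (-(1:ℝ) / 2) * (1 + s) ^ c)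
      ≤ ∫ s in (t / 2)..t, (t - s) ^ (-(1:ℝ) / 2) * (1 + t/2) ^ c := by
    apply intervalIntegral.integral_mono_on (by linarith)
    · exact hbase2.mul_continuousOn hcont
    · exact hbase2.mul_const _
    · intro x hx
      obtain ⟨hx1, hx2⟩ := hx
      apply mul_le_mul_of_nonneg_left _ (Real.rpow_nonneg (by linarith) _)
      exact Real.rpow_le_rpow_of_nonpos (by linarith) (by linarith) hc0
  have step2 : (∫ s in (t / 2)..t, (t - s) ^ (-(1:ℝ) / 2) * (1 + t/2) ^ c)
      = 2 * (t / 2) ^ ((1:ℝ) / 2) * (1 + t/2) ^ c := by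
    rw [intervalIntegral.integral_mul_const, sqrt_integral t ht]
  have h14 : (0:ℝ) < 1 + t := by linarith
  have step3 : 2 * (t / 2) ^ ((1:ℝ) / 2) * (1 + t/2) ^ c
      ≤ 2 * (1 + t) ^ ((1:ℝ) / 2) * (4 * (1 + t) ^ c) := by
    have e1 : (t / 2) ^ ((1:ℝ) / 2) ≤ (1 + t) ^ ((1:ℝ) / 2) :=
      Real.rpow_le_rpow (by linarith) (by linarith) (by norm_num)
    have e2 : (1 + t/2) ^ c ≤ ((1 + t)/2) ^ c :=
      Real.rpow_le_rpow_of_nonpos (by linarith) (by linarith) hc0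
    have e3 : ((1 + t)/2) ^ c = (1 + t) ^ c * 2 ^ (-c) := by
      rw [Real.div_rpow (by linarith) (by norm_num), div_eq_mul_inv, ← Real.rpow_neg (by norm_num)]
    have e4 : (2:ℝ) ^ (-c) ≤ 4 := by
      have h32 : 3/(2*p) ≤ 3/2 := by
        rw [div_le_div_iff₀ (by linarith) (by norm_num)]; linarith
      calc (2:ℝ) ^ (-c) ≤ (2:ℝ) ^ ((2:ℕ):ℝ) := by
            apply Real.rpow_le_rpow_of_exponent_le (by norm_num)
            rw [hcdef]; push_cast; linarith
        _ = 4 := by rw [Real.rpow_natCast]; norm_num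
    have e5 : (1 + t/2) ^ c ≤ 4 * (1 + t) ^ c := by
      calc (1 + t/2) ^ c ≤ (1 + t) ^ c * 2 ^ (-c) := by rw [← e3]; exact e2
        _ ≤ (1 + t) ^ c * 4 := mul_le_mul_of_nonneg_left e4 (Real.rpow_nonneg (by linarith) _)
        _ = 4 * (1 + t) ^ c := mul_comm _ _
    calc 2 * (t / 2) ^ ((1:ℝ) / 2) * (1 + t/2) ^ c
        ≤ 2 * (1 + t) ^ ((1:ℝ) / 2) * (1 + t/2) ^ c := by
          apply mul_le_mul_of_nonneg_right _ (Real.rpow_nonneg (by linarith) _)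
          linarith
      _ ≤ 2 * (1 + t) ^ ((1:ℝ) / 2) * (4 * (1 + t) ^ c) := by
          apply mul_le_mul_of_nonneg_left e5
          positivity
  have step4 : 2 * (1 + t) ^ ((1:ℝ) / 2) * (4 * (1 + t) ^ c)
      ≤ 8 * (1 + t) ^ (-(1 / 2) - 1 / (2 * p)) := by
    have e6 : (1 + t) ^ ((1:ℝ) / 2) * (1 + t) ^ c = (1 + t) ^ ((1:ℝ)/2 + c) :=
      (Real.rpow_add h14 _ _).symm
    have e7 : (1 + t) ^ ((1:ℝ)/2 + c) ≤ (1 + t) ^ (-(1 / 2) - 1 / (2 * p)) := by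
      apply Real.rpow_le_rpow_of_exponent_le (by linarith)
      rw [hcdef]
      have : 1/2 ≤ 1/p := by
        rw [div_le_div_iff₀ (by norm_num) hp0]; linarith
      have h2p : 3/(2*p) - 1/(2*p) = 1/p := by
        rw [div_sub_div_same, show (3:ℝ) - 1 = 2 by norm_num, div_mul_eq_div_div]
        norm_num
      linarith [h2p]
    calc 2 * (1 + t) ^ ((1:ℝ) / 2) * (4 * (1 + t) ^ c)
        = 8 * ((1 + t) ^ ((1:ℝ)/2 + c)) := by rw [← e6]; ring
      _ ≤ 8 * (1 + t) ^ (-(1 / 2) - 1 / (2 * p)) := by linarith [e7]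
  calc (∫ s in (t / 2)..t, (t - s) ^ (-(1:ℝ) / 2) * (1 + s) ^ (-(1 / 2) - 3 / (2 * p)))
      = (∫ s in (t / 2)..t, (t - s) ^ (-(1:ℝ) / 2) * (1 + s) ^ c) := by rw [hcdef]
    _ ≤ 2 * (t / 2) ^ ((1:ℝ) / 2) * (1 + t/2) ^ c := step2 ▸ step1
    _ ≤ 2 * (1 + t) ^ ((1:ℝ) / 2) * (4 * (1 + t) ^ c) := step3
    _ ≤ 8 * (1 + t) ^ (-(1 / 2) - 1 / (2 * p)) := step4

/-- Split-interval convolution estimate: for `1 ≤ p ≤ 2` and `t ≥ 2`,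
`∫₀^{t/2} (t-s)⁻¹ (1+s)^{-3/(2p)} ds + ∫_{t/2}^t (t-s)^{-1/2} (1+s)^{-1/2-3/(2p)} ds
  ≤ C (1+t)^{-1/2-1/(2p)}`. -/
theorem stmt_9 (p : ℝ) (hp1 : 1 ≤ p) (hp2 : p ≤ 2) :
    ∃ C > 0, ∀ t : ℝ, 2 ≤ t →
      (∫ s in (0 : ℝ)..(t / 2), (t - s)⁻¹ * (1 + s) ^ (-(3 / (2 * p))))
        + (∫ s in (t / 2)..t, (t - s) ^ (-(1 : ℝ) / 2) * (1 + s) ^ (-(1 / 2) - 3 / (2 * p)))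
        ≤ C * (1 + t) ^ (-(1 / 2) - 1 / (2 * p)) := by
  have hp0 : (0:ℝ) < p := by linarith
  rcases lt_or_ge p (3/2) with hcase | hcase
  · -- p < 3/2 : exponent 3/(2p) > 1
    set c : ℝ := 3/(2*p) with hcdef
    have hc1 : 1 < c := by rw [hcdef, lt_div_iff₀ (by positivity)]; linarith
    have hc0 : (0:ℝ) < c - 1 := by linarith
    refine ⟨3/(c-1) + 8, by positivity, fun t ht => ?_⟩
    have ht0 : (0:ℝ) < t := by linarith
    have h14 : (0:ℝ) < 1 + t := by linarith
    have h1 := first_le c c t le_rfl ht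
    rw [integral_shift c (t/2) hc1.ne' (by linarith)] at h1
    have hfirst : (∫ s in (0:ℝ)..(t/2), (t - s)⁻¹ * (1 + s) ^ (-c))
        ≤ 3/(c-1) * (1 + t) ^ (-(1/2) - 1/(2*p)) := by
      have hx0 : (0:ℝ) ≤ (1 + t/2) ^ (1 - c) := Real.rpow_nonneg (by linarith) _
      have hxle : (1 + t/2) ^ (1 - c) ≤ 1 :=
        Real.rpow_le_one_of_one_le_of_nonpos (by linarith) (by linarith)
      have h2 : ((1 + t/2) ^ (1 - c) - 1)/(1 - c) ≤ 1/(c - 1) := by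
        rw [show ((1 + t/2) ^ (1 - c) - 1)/(1 - c) = (1 - (1 + t/2) ^ (1 - c))/(c - 1) by
          rw [div_eq_div_iff (ne_of_lt (by linarith : 1 - c < 0))
            (ne_of_gt (by linarith : (0:ℝ) < c - 1))]; ring]
        gcongr
        linarith
      have h3 : 2/t ≤ 3/(1 + t) := by
        rw [div_le_div_iff₀ ht0 h14]; linarith
      calc (∫ s in (0:ℝ)..(t/2), (t - s)⁻¹ * (1 + s) ^ (-c))
          ≤ (2/t) * (((1 + t/2) ^ (1 - c) - 1)/(1 - c)) := h1
        _ ≤ (2/t) * (1/(c - 1)) :=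
            mul_le_mul_of_nonneg_left h2 (by positivity)
        _ ≤ (3/(1 + t)) * (1/(c - 1)) :=
            mul_le_mul_of_nonneg_right h3 (div_nonneg one_pos.le (by linarith))
        _ = (3/(c - 1)) * (1 + t) ^ (-(1:ℝ)) := by
            rw [Real.rpow_neg_one]; field_simp
        _ ≤ 3/(c - 1) * (1 + t) ^ (-(1/2) - 1/(2*p)) := by
            apply mul_le_mul_of_nonneg_left _ (div_nonneg (by norm_num) (by linarith))
            apply Real.rpow_le_rpow_of_exponent_le (by linarith)
            have : 1/(2*p) ≤ 1/2 := by rw [div_le_div_iff₀ (by linarith) (by norm_num)]; linarith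
            linarith
    have hsecond := second_le p t hp1 hp2 ht
    rw [← hcdef] at hsecond
    have hX : (0:ℝ) ≤ (1 + t) ^ (-(1/2) - 1/(2*p)) := Real.rpow_nonneg (by linarith) _
    linarith
  · -- 3/2 ≤ p : exponent 3/(2p) ≤ 1
    refine ⟨26, by norm_num, fun t ht => ?_⟩
    have ht0 : (0:ℝ) < t := by linarith
    have h14 : (0:ℝ) < 1 + t := by linarith
    have hb3 : 1/(2*p) ≤ 1/3 := by rw [div_le_div_iff₀ (by linarith) (by norm_num)]; linarith
    have hb4 : (1:ℝ)/4 ≤ 1/(2*p) := by rw [div_le_div_iff₀ (by norm_num) (by linarith)]; linarith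
    set b : ℝ := 1/2 + 1/(2*p) with hbdef
    have hbne : b ≠ 1 := ne_of_lt (by rw [hbdef]; linarith)
    have hbc : b ≤ 3/(2*p) := by
      have h2p : 3/(2*p) - 1/(2*p) = 1/p := by
        rw [div_sub_div_same, show (3:ℝ) - 1 = 2 by norm_num, div_mul_eq_div_div]
        norm_num
      have hhp : 1/2 ≤ 1/p := by rw [div_le_div_iff₀ (by norm_num) (by linarith)]; linarith
      rw [hbdef]; linarith
    have h1 := first_le (3/(2*p)) b t hbc ht
    rw [integral_shift b (t/2) hbne (by linarith)] at h1
    have hb1 : 0 ≤ 1 - b := by rw [hbdef]; linarith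
    have hb6 : (1:ℝ)/6 ≤ 1 - b := by rw [hbdef]; linarith
    have hfirst : (∫ s in (0:ℝ)..(t/2), (t - s)⁻¹ * (1 + s) ^ (-(3/(2*p))))
        ≤ 18 * (1 + t) ^ (-(1/2) - 1/(2*p)) := by
      have h3 : 2/t ≤ 3/(1 + t) := by
        rw [div_le_div_iff₀ ht0 h14]; linarith
      calc (∫ s in (0:ℝ)..(t/2), (t - s)⁻¹ * (1 + s) ^ (-(3/(2*p))))
          ≤ (2/t) * (((1 + t/2) ^ (1 - b) - 1)/(1 - b)) := h1
        _ ≤ (2/t) * ((1 + t) ^ (1 - b)/(1/6)) := by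
            apply mul_le_mul_of_nonneg_left _ (by positivity)
            have hA : (1 + t/2) ^ (1 - b) - 1 ≤ (1 + t) ^ (1 - b) := by
              have := Real.rpow_le_rpow (x := 1 + t/2) (by linarith)
                (by linarith : 1 + t/2 ≤ 1 + t) hb1
              linarith
            exact div_le_div₀ (Real.rpow_nonneg (by linarith) _) hA (by norm_num) hb6
        _ = (2/t) * (6 * (1 + t) ^ (1 - b)) := by ring
        _ ≤ (3/(1 + t)) * (6 * (1 + t) ^ (1 - b)) := by
            apply mul_le_mul_of_nonneg_right h3
            have := Real.rpow_nonneg (le_of_lt h14) (1 - b)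
            linarith
        _ = 18 * ((1 + t) ^ (-(1:ℝ)) * (1 + t) ^ (1 - b)) := by
            rw [Real.rpow_neg_one]; field_simp; ring
        _ = 18 * (1 + t) ^ (-(1:ℝ) + (1 - b)) := by rw [← Real.rpow_add h14]
        _ = 18 * (1 + t) ^ (-(1/2) - 1/(2*p)) := by
            rw [show -(1:ℝ) + (1 - b) = -(1/2) - 1/(2*p) by rw [hbdef]; ring]
    have hsecond := second_le p t hp1 hp2 ht
    have hX : (0:ℝ) ≤ (1 + t) ^ (-(1/2) - 1/(2*p)) := Real.rpow_nonneg (by linarith) _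
    linarith
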